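/- Let W₁,…,Wₖ be unitary n×n matrices, q a probability distribution, W̄ = Σₐ q(a) Wₐ, and δ = Σₐ q(a) ‖Wₐ − W̄‖². Then for any matrix σ with trace norm at most 1, the trace norm of Σₐ q(a) Wₐ σ Wₐ† − W̄ σ W̄† is at most δ. -/

import Mathlib

open scoped Matrix.Norms.L2Operator ComplexOrder Kronecker
open Matrix Complex

/-- The positive semidefinite square root of a positive semidefinite matrix
(the definition Mathlib had as `Matrix.PosSemidef.sqrt`, since removed). -/
noncomputable def Matrix.PosSemidef.sqrt {n 𝕜 : Type*} [Fintype n] [RCLike 𝕜] [DecidableEq n]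
    {A : Matrix n n 𝕜} (hA : Matrix.PosSemidef A) : Matrix n n 𝕜 :=
  hA.1.eigenvectorUnitary.1 * Matrix.diagonal ((↑) ∘ (√·) ∘ hA.1.eigenvalues) *
    (star hA.1.eigenvectorUnitary : Matrix n n 𝕜)

/-- The trace norm (sum of singular values) of a square complex matrix. -/
noncomputable def traceNorm {n : Type*} [Fintype n] [DecidableEq n] (A : Matrix n n ℂ) : ℝ :=
  ((Matrix.posSemidef_conjTranspose_mul_self A).sqrt.trace).re

set_option linter.unusedSectionVars false
variable {m : Type*} [Fintype m] [DecidableEq m]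

lemma euclid_apply_le (x : EuclideanSpace ℂ m) (i : m) : ‖x i‖ ≤ ‖x‖ := by
  rw [EuclideanSpace.norm_eq]
  have h : ‖x i‖ ^ 2 ≤ ∑ j, ‖x j‖ ^ 2 :=
    Finset.single_le_sum (fun j _ => sq_nonneg ‖x j‖) (Finset.mem_univ i)
  calc ‖x i‖ = Real.sqrt (‖x i‖ ^ 2) := (Real.sqrt_sq (norm_nonneg _)).symm
    _ ≤ _ := Real.sqrt_le_sqrt h

lemma entry_le_opNorm (A : Matrix m m ℂ) (i j : m) : ‖A i j‖ ≤ ‖A‖ := by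
  have h := Matrix.l2_opNorm_mulVec A (EuclideanSpace.single j (1 : ℂ))
  rw [EuclideanSpace.norm_single, norm_one, mul_one] at h
  refine le_trans ?_ h
  have h2 := euclid_apply_le ((EuclideanSpace.equiv m ℂ).symm <| A *ᵥ (EuclideanSpace.single j (1:ℂ))) i
  refine le_trans (le_of_eq ?_) h2
  congr 1
  simp [mulVec, dotProduct, EuclideanSpace.single_apply]

lemma opNorm_one_le : ‖(1 : Matrix m m ℂ)‖ ≤ 1 := by
  rw [Matrix.cstar_norm_def, _root_.map_one]
  exact ContinuousLinearMap.norm_id_le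

lemma opNorm_unitary_le {V : Matrix m m ℂ} (hV : Vᴴ * V = 1) : ‖V‖ ≤ 1 := by
  have h : ‖V‖ * ‖V‖ ≤ 1 := by
    rw [← Matrix.l2_opNorm_conjTranspose_mul_self, hV]; exact opNorm_one_le
  nlinarith [norm_nonneg V]

lemma master (A : Matrix m m ℂ) :
    ∃ (B V : Matrix m m ℂ) (s : m → ℝ),
      (∀ i, 0 ≤ s i) ∧ ‖B‖ ≤ 1 ∧ Vᴴ * V = 1 ∧ V * Vᴴ = 1 ∧
      A = B * diagonal (fun i => (s i : ℂ)) * Vᴴ ∧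
      traceNorm A = ∑ i, s i ∧
      Bᴴ * B * diagonal (fun i => (s i : ℂ)) = diagonal (fun i => (s i : ℂ)) := by
  set h := Matrix.posSemidef_conjTranspose_mul_self A with hh
  set hH := h.1
  set V : Matrix m m ℂ := (hH.eigenvectorUnitary : Matrix m m ℂ) with hVdef
  set d : m → ℝ := hH.eigenvalues with hddef
  have hd : ∀ i, 0 ≤ d i := h.eigenvalues_nonneg
  set s : m → ℝ := fun i => Real.sqrt (d i) with hsdef
  have hs0 : ∀ i, 0 ≤ s i := fun i => Real.sqrt_nonneg _
  have hss : ∀ i, (s i : ℝ) * s i = d i := fun i => Real.mul_self_sqrt (hd i)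
  set p : m → ℂ := fun i => if d i = 0 then 0 else ((s i : ℂ))⁻¹ with hpdef
  set e : m → ℂ := fun i => if d i = 0 then 0 else 1 with hedef
  set C : Matrix m m ℂ := A * V with hCdef
  set B : Matrix m m ℂ := C * diagonal p with hBdef
  have hVV : Vᴴ * V = 1 := by
    have := (Matrix.mem_unitaryGroup_iff').mp hH.eigenvectorUnitary.2
    simpa [star_eq_conjTranspose] using this
  have hVV' : V * Vᴴ = 1 := by
    have := (Matrix.mem_unitaryGroup_iff).mp hH.eigenvectorUnitary.2
    simpa [star_eq_conjTranspose] using this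
  have hdiag : Vᴴ * (Aᴴ * A) * V = diagonal (fun i => (d i : ℂ)) := by
    have := (Unitary.conjStarAlgAut_star_apply (S := ℂ) _ _).symm.trans
      hH.conjStarAlgAut_star_eigenvectorUnitary
    exact this
  have hC : Cᴴ * C = diagonal (fun i => (d i : ℂ)) := by
    rw [hCdef, conjTranspose_mul, ← hdiag]
    simp only [Matrix.mul_assoc]
  have hcol : ∀ j, d j = 0 → ∀ i, C i j = 0 := by
    intro j hj i
    have hjj := congrFun (congrFun hC j) j
    simp only [Matrix.mul_apply, Matrix.conjTranspose_apply, Matrix.diagonal_apply_eq, hj,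
      Complex.ofReal_zero] at hjj
    have hterm : ∀ k ∈ Finset.univ, (0 : ℂ) ≤ star (C k j) * C k j :=
      fun k _ => star_mul_self_nonneg _
    have h0 := (Finset.sum_eq_zero_iff_of_nonneg hterm).mp hjj i (Finset.mem_univ i)
    rcases mul_eq_zero.mp h0 with h1 | h1
    · exact star_eq_zero.mp h1
    · exact h1
  have hBB : Bᴴ * B = diagonal e := by
    rw [hBdef, conjTranspose_mul, diagonal_conjTranspose, Matrix.mul_assoc,
      ← Matrix.mul_assoc Cᴴ C, hC, diagonal_mul_diagonal, diagonal_mul_diagonal]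
    refine congrArg diagonal (funext fun i => ?_)
    by_cases hi : d i = 0
    · simp [hpdef, hedef, hi]
    · have hsne : (s i : ℂ) ≠ 0 := by
        simp only [ne_eq, Complex.ofReal_eq_zero]
        exact fun hcon => hi (by rw [← hss i, hcon, mul_zero])
      have hds : ((d i : ℂ)) = (s i : ℂ) * (s i : ℂ) := by
        rw [← Complex.ofReal_mul, hss i]
      simp only [hpdef, hedef, Pi.star_apply, hi, if_neg, ite_false, hds, star_inv₀,
        Complex.star_def, Complex.conj_ofReal]
      field_simp
  have hBnorm : ‖B‖ ≤ 1 := by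
    have hPstar : (diagonal e)ᴴ = diagonal e := by
      rw [diagonal_conjTranspose]
      refine congrArg diagonal (funext fun i => ?_)
      by_cases hi : d i = 0 <;> simp [hedef, hi]
    have hPP : diagonal e * diagonal e = diagonal e := by
      rw [diagonal_mul_diagonal]
      refine congrArg diagonal (funext fun i => ?_)
      by_cases hi : d i = 0 <;> simp [hedef, hi]
    have hP1 : ‖diagonal e‖ * ‖diagonal e‖ = ‖diagonal e‖ := by
      conv_lhs => rw [← Matrix.l2_opNorm_conjTranspose_mul_self]
      rw [hPstar, hPP]
    have hPle : ‖diagonal e‖ ≤ 1 := by nlinarith [norm_nonneg (diagonal e)]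
    have hB2 : ‖B‖ * ‖B‖ ≤ 1 := by
      rw [← Matrix.l2_opNorm_conjTranspose_mul_self, hBB]; exact hPle
    nlinarith [norm_nonneg B]
  have hCe : C * diagonal e = C := by
    ext i j
    rw [Matrix.mul_diagonal]
    by_cases hj : d j = 0
    · simp [hedef, hj, hcol j hj i]
    · simp [hedef, hj]
  have hpe : diagonal p * diagonal (fun i => (s i : ℂ)) = diagonal e := by
    rw [diagonal_mul_diagonal]
    refine congrArg diagonal (funext fun i => ?_)
    by_cases hi : d i = 0
    · simp [hpdef, hedef, hi]
    · have hsne : (s i : ℂ) ≠ 0 := by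
        simp only [ne_eq, Complex.ofReal_eq_zero]
        exact fun hcon => hi (by rw [← hss i, hcon, mul_zero])
      simp [hpdef, hedef, hi, inv_mul_cancel₀ hsne]
  have hA : A = B * diagonal (fun i => (s i : ℂ)) * Vᴴ := by
    rw [hBdef, Matrix.mul_assoc C, hpe, hCe, hCdef, Matrix.mul_assoc, hVV', Matrix.mul_one]
  have htr : traceNorm A = ∑ i, s i := by
    have hsq : h.sqrt = V * diagonal (fun i => (s i : ℂ)) * Vᴴ := rfl
    have : traceNorm A = (h.sqrt.trace).re := rfl
    rw [this, hsq, Matrix.trace_mul_cycle, hVV, Matrix.one_mul, Matrix.trace_diagonal]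
    simp [Complex.re_sum]
  have hE : Bᴴ * B * diagonal (fun i => (s i : ℂ)) = diagonal (fun i => (s i : ℂ)) := by
    rw [hBB, diagonal_mul_diagonal]
    refine congrArg diagonal (funext fun i => ?_)
    by_cases hi : d i = 0
    · simp [hedef, hsdef, hi]
    · simp [hedef, hi]
  exact ⟨B, V, s, hs0, hBnorm, hVV, hVV', hA, htr, hE⟩

lemma trace_mul_diag (M : Matrix m m ℂ) (v : m → ℂ) :
    (M * diagonal v).trace = ∑ i, M i i * v i := by
  simp [Matrix.trace, Matrix.diag, Matrix.mul_diagonal]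

lemma trace_re_le (A X : Matrix m m ℂ) : ((X * A).trace).re ≤ ‖X‖ * traceNorm A := by
  obtain ⟨B, V, s, hs0, hB, hVV, hVV', hA, htr, hE⟩ := master A
  have hVn : ‖V‖ ≤ 1 := opNorm_unitary_le hVV
  have hVt : ‖Vᴴ‖ ≤ 1 := by rw [Matrix.l2_opNorm_conjTranspose]; exact hVn
  set M : Matrix m m ℂ := Vᴴ * X * B with hMdef
  have hM : ‖M‖ ≤ ‖X‖ := by
    calc ‖Vᴴ * X * B‖ ≤ ‖Vᴴ * X‖ * ‖B‖ := Matrix.l2_opNorm_mul _ _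
      _ ≤ ‖Vᴴ‖ * ‖X‖ * ‖B‖ := by
          have := Matrix.l2_opNorm_mul Vᴴ X
          exact mul_le_mul_of_nonneg_right this (norm_nonneg _)
      _ ≤ 1 * ‖X‖ * 1 :=
          mul_le_mul (mul_le_mul_of_nonneg_right hVt (norm_nonneg X)) hB (norm_nonneg B)
            (by positivity)
      _ = ‖X‖ := by ring
  have h1 : X * A = (X * B * diagonal (fun i => (s i : ℂ))) * Vᴴ := by
    rw [hA]; simp only [Matrix.mul_assoc]
  have h2 : Vᴴ * (X * B * diagonal (fun i => (s i : ℂ))) = M * diagonal (fun i => (s i : ℂ)) := by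
    rw [hMdef]; simp only [Matrix.mul_assoc]
  rw [h1, Matrix.trace_mul_comm, h2, trace_mul_diag, Complex.re_sum, htr, Finset.mul_sum]
  apply Finset.sum_le_sum
  intro i _
  have hentry : (M i i).re ≤ ‖X‖ := by
    calc (M i i).re ≤ ‖M i i‖ := Complex.re_le_norm _
      _ ≤ ‖M‖ := entry_le_opNorm M i i
      _ ≤ ‖X‖ := hM
  calc (M i i * (s i : ℂ)).re = (M i i).re * s i := by
        simp [Complex.mul_re]
    _ ≤ ‖X‖ * s i := mul_le_mul_of_nonneg_right hentry (hs0 i)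

lemma exists_dual (A : Matrix m m ℂ) :
    ∃ U : Matrix m m ℂ, ‖U‖ ≤ 1 ∧ ((U * A).trace).re = traceNorm A := by
  obtain ⟨B, V, s, hs0, hB, hVV, hVV', hA, htr, hE⟩ := master A
  have hVn : ‖V‖ ≤ 1 := opNorm_unitary_le hVV
  have hBt : ‖Bᴴ‖ ≤ 1 := by rw [Matrix.l2_opNorm_conjTranspose]; exact hB
  refine ⟨V * Bᴴ, ?_, ?_⟩
  · calc ‖V * Bᴴ‖ ≤ ‖V‖ * ‖Bᴴ‖ := Matrix.l2_opNorm_mul _ _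
      _ ≤ 1 * 1 := mul_le_mul hVn hBt (norm_nonneg Bᴴ) zero_le_one
      _ = 1 := by ring
  · have h1 : (V * Bᴴ) * A = V * (Bᴴ * B * diagonal (fun i => (s i : ℂ)) * Vᴴ) := by
      rw [hA]; simp only [Matrix.mul_assoc]
    rw [h1, hE, ← Matrix.mul_assoc, Matrix.trace_mul_cycle, hVV, Matrix.one_mul,
      Matrix.trace_diagonal, htr]
    simp [Complex.re_sum]

theorem stmt_2 {n k : ℕ} (W : Fin k → Matrix (Fin n) (Fin n) ℂ)
    (hW : ∀ a, W a ∈ Matrix.unitaryGroup (Fin n) ℂ)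
    (q : Fin k → ℝ) (hq0 : ∀ a, 0 ≤ q a) (hq1 : ∑ a, q a = 1)
    (Wbar : Matrix (Fin n) (Fin n) ℂ) (hWbar : Wbar = ∑ a, (q a : ℂ) • W a)
    (δ : ℝ) (hδ : δ = ∑ a, q a * ‖W a - Wbar‖ ^ 2)
    (σ : Matrix (Fin n) (Fin n) ℂ) (hσ : traceNorm σ ≤ 1) :
    traceNorm (∑ a, (q a : ℂ) • (W a * σ * (W a)ᴴ) - Wbar * σ * Wbarᴴ) ≤ δ := by
  have hqc : (∑ a, (q a : ℂ)) = 1 := by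
    have := congrArg (fun x : ℝ => (x : ℂ)) hq1
    simpa using this
  have hkey : ∑ a, (q a : ℂ) • (W a * σ * (W a)ᴴ) - Wbar * σ * Wbarᴴ
      = ∑ a, (q a : ℂ) • ((W a - Wbar) * σ * (W a - Wbar)ᴴ) := by
    have expand : ∀ a : Fin k, (q a : ℂ) • ((W a - Wbar) * σ * (W a - Wbar)ᴴ)
        = (q a : ℂ) • (W a * σ * (W a)ᴴ) - (q a : ℂ) • (W a * σ * Wbarᴴ)
          - (q a : ℂ) • (Wbar * σ * (W a)ᴴ) + (q a : ℂ) • (Wbar * σ * Wbarᴴ) := by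
      intro a
      simp only [conjTranspose_sub, Matrix.sub_mul, Matrix.mul_sub, smul_sub]
      abel
    rw [Finset.sum_congr rfl (fun a _ => expand a), Finset.sum_add_distrib,
      Finset.sum_sub_distrib, Finset.sum_sub_distrib]
    have e1 : ∑ a, (q a : ℂ) • (W a * σ * Wbarᴴ) = Wbar * σ * Wbarᴴ := by
      calc ∑ a, (q a : ℂ) • (W a * σ * Wbarᴴ) = ∑ a, ((q a : ℂ) • W a) * (σ * Wbarᴴ) := by
            refine Finset.sum_congr rfl fun a _ => ?_
            rw [smul_mul_assoc, Matrix.mul_assoc]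
        _ = (∑ a, (q a : ℂ) • W a) * (σ * Wbarᴴ) := (Finset.sum_mul _ _ _).symm
        _ = Wbar * (σ * Wbarᴴ) := by rw [← hWbar]
        _ = Wbar * σ * Wbarᴴ := (Matrix.mul_assoc _ _ _).symm
    have e2 : ∑ a, (q a : ℂ) • (Wbar * σ * (W a)ᴴ) = Wbar * σ * Wbarᴴ := by
      have hWbarH : (∑ a, (q a : ℂ) • (W a)ᴴ) = Wbarᴴ := by
        rw [hWbar, conjTranspose_sum]
        refine Finset.sum_congr rfl fun a _ => ?_
        rw [conjTranspose_smul, Complex.star_def, Complex.conj_ofReal]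
      calc ∑ a, (q a : ℂ) • (Wbar * σ * (W a)ᴴ) = ∑ a, (Wbar * σ) * ((q a : ℂ) • (W a)ᴴ) := by
            refine Finset.sum_congr rfl fun a _ => ?_
            rw [mul_smul_comm]
        _ = (Wbar * σ) * (∑ a, (q a : ℂ) • (W a)ᴴ) := (Finset.mul_sum _ _ _).symm
        _ = Wbar * σ * Wbarᴴ := by rw [hWbarH]
    have e3 : ∑ a, (q a : ℂ) • (Wbar * σ * Wbarᴴ) = Wbar * σ * Wbarᴴ := by
      rw [← Finset.sum_smul, hqc, one_smul]
    rw [e1, e2, e3]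
    abel
  rw [hkey]
  obtain ⟨U, hU, hUtr⟩ := exists_dual (∑ a, (q a : ℂ) • ((W a - Wbar) * σ * (W a - Wbar)ᴴ))
  rw [← hUtr]
  have hexp : (U * ∑ a, (q a : ℂ) • ((W a - Wbar) * σ * (W a - Wbar)ᴴ)).trace
      = ∑ a, (q a : ℂ) * ((U * ((W a - Wbar) * σ * (W a - Wbar)ᴴ)).trace) := by
    rw [Finset.mul_sum, trace_sum]
    refine Finset.sum_congr rfl fun a _ => ?_
    rw [mul_smul_comm, trace_smul, smul_eq_mul]
  rw [hexp, Complex.re_sum, hδ]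
  apply Finset.sum_le_sum
  intro a _
  set D : Matrix (Fin n) (Fin n) ℂ := W a - Wbar with hD
  have hre : ((q a : ℂ) * ((U * (D * σ * Dᴴ)).trace)).re
      = q a * ((U * (D * σ * Dᴴ)).trace).re := by
    simp [Complex.mul_re]
  rw [hre]
  have hcyc : (U * (D * σ * Dᴴ)).trace = ((Dᴴ * U * D) * σ).trace := by
    rw [show U * (D * σ * Dᴴ) = (U * (D * σ)) * Dᴴ from by simp only [Matrix.mul_assoc],
      Matrix.trace_mul_comm,
      show Dᴴ * (U * (D * σ)) = (Dᴴ * U * D) * σ from by simp only [Matrix.mul_assoc]]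
  rw [hcyc]
  have hXn : ‖Dᴴ * U * D‖ ≤ ‖D‖ ^ 2 := by
    have h1 := Matrix.l2_opNorm_mul (Dᴴ * U) D
    have h2 := Matrix.l2_opNorm_mul Dᴴ U
    have h3 : ‖Dᴴ‖ = ‖D‖ := Matrix.l2_opNorm_conjTranspose D
    calc ‖Dᴴ * U * D‖ ≤ ‖Dᴴ * U‖ * ‖D‖ := h1
      _ ≤ (‖Dᴴ‖ * ‖U‖) * ‖D‖ := mul_le_mul_of_nonneg_right h2 (norm_nonneg D)
      _ ≤ (‖D‖ * 1) * ‖D‖ := by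
          rw [h3]
          exact mul_le_mul_of_nonneg_right (mul_le_mul_of_nonneg_left hU (norm_nonneg D))
            (norm_nonneg D)
      _ = ‖D‖ ^ 2 := by ring
  have hmain : (((Dᴴ * U * D) * σ).trace).re ≤ ‖D‖ ^ 2 := by
    calc (((Dᴴ * U * D) * σ).trace).re ≤ ‖Dᴴ * U * D‖ * traceNorm σ := trace_re_le σ _
      _ ≤ ‖Dᴴ * U * D‖ * 1 := mul_le_mul_of_nonneg_left hσ (norm_nonneg _)
      _ = ‖Dᴴ * U * D‖ := mul_one _
      _ ≤ ‖D‖ ^ 2 := hXn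
  exact mul_le_mul_of_nonneg_left hmain (hq0 a)
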